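/- arXiv:1009.2354 — 3 statements merged into one kernel-verified Lean document; each statement's English description precedes it below -/
import Mathlib

section
/- For non-singular s (all s_i − s_j units, i ≠ j) and f the identity map, the generalized divided differences satisfy id^{⟨k⟩}(v₀,…,v_k; s₀,…,s_k) = v_k, where f^{⟨k⟩}(v;s) := Σ_{i=0}^{k} f(v₀ + Σ_{j=1}^{i} ∏_{ℓ=0}^{j−1}(s_i − s_ℓ)v_j)/∏_{j≠i}(s_i − s_j). -/
open Finset

lemma inverse_prod {K : Type*} [CommRing K] {ι : Type*} (F : Finset ι) (f : ι → K) :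
    Ring.inverse (∏ l ∈ F, f l) = ∏ l ∈ F, Ring.inverse (f l) := by
  classical
  induction F using Finset.induction with
  | empty => simp
  | @insert a s h ih => rw [Finset.prod_insert h, Finset.prod_insert h, Ring.mul_inverse_rev, ih, mul_comm]

lemma inverse_neg' {K : Type*} [CommRing K] {e : K} (h : IsUnit e) :
    Ring.inverse (-e) = - Ring.inverse e := by
  obtain ⟨u, rfl⟩ := h
  rw [← Units.val_neg, Ring.inverse_unit, Ring.inverse_unit, ← Units.val_neg]
  norm_num

lemma inv_pair {K : Type*} [CommRing K] {p q : K} (hp : IsUnit p) (hq : IsUnit q)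
    (hpq : IsUnit (p - q)) :
    Ring.inverse p * Ring.inverse q =
      Ring.inverse (p - q) * (Ring.inverse q - Ring.inverse p) := by
  have h := (hp.mul (hq.mul hpq)).mul_left_cancel (b := Ring.inverse p * Ring.inverse q)
    (c := Ring.inverse (p - q) * (Ring.inverse q - Ring.inverse p))
  apply h
  have e1 : p * Ring.inverse p = 1 := Ring.mul_inverse_cancel p hp
  have e2 : q * Ring.inverse q = 1 := Ring.mul_inverse_cancel q hq
  have e3 : (p - q) * Ring.inverse (p - q) = 1 := Ring.mul_inverse_cancel _ hpq
  calc p * (q * (p - q)) * (Ring.inverse p * Ring.inverse q)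
      = (p * Ring.inverse p) * (q * Ring.inverse q) * (p - q) := by ring
    _ = p - q := by rw [e1, e2]; ring
    _ = ((p-q) * Ring.inverse (p-q)) * (p * (q * Ring.inverse q) - q * (p * Ring.inverse p)) := by
        rw [e1, e2, e3]; ring
    _ = p * (q * (p - q)) * (Ring.inverse (p - q) * (Ring.inverse q - Ring.inverse p)) := by ring

lemma key {K : Type*} [CommRing K] {ι : Type*} [DecidableEq ι] (x : ι → K) :
    ∀ F : Finset ι, 2 ≤ F.card →
      (∀ i ∈ F, ∀ j ∈ F, i ≠ j → IsUnit (x i - x j)) →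
      ∑ i ∈ F, Ring.inverse (∏ l ∈ F.erase i, (x i - x l)) = 0 := by
  intro F
  induction F using Finset.strongInduction with
  | _ F ih =>
    intro hcard hu
    have hFne : F.Nonempty := Finset.card_pos.mp (by omega)
    obtain ⟨a, ha⟩ := hFne
    have h1 : (F.erase a).Nonempty := Finset.card_pos.mp
      (by rw [Finset.card_erase_of_mem ha]; omega)
    obtain ⟨b, hb⟩ := h1
    obtain ⟨hba, hbF⟩ := Finset.mem_erase.mp hb
    set G := (F.erase a).erase b with hG
    have haG : a ∉ G := fun h => (Finset.mem_erase.mp ((Finset.mem_erase.mp h).2)).1 rfl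
    have hbG : b ∉ G := fun h => (Finset.mem_erase.mp h).1 rfl
    have hGF : G ⊆ F := (Finset.erase_subset _ _).trans (Finset.erase_subset _ _)
    have hFa : F.erase a = insert b G := (Finset.insert_erase hb).symm
    have hF : F = insert a (insert b G) := by rw [← hFa, Finset.insert_erase ha]
    have hanb : a ∉ insert b G := by simp [haG, hba.symm]
    have hGcard : G.card = F.card - 2 := by
      rw [hG, Finset.card_erase_of_mem hb, Finset.card_erase_of_mem ha]; omega
    have he : IsUnit (x b - x a) := hu b hbF a ha hba
    set e := x b - x a with hedef
    have hEa : (insert a (insert b G)).erase a = insert b G := Finset.erase_insert hanb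
    have hEb : (insert a (insert b G)).erase b = insert a G := by
      rw [Finset.erase_insert_of_ne hba.symm, Finset.erase_insert hbG]
    have hbGa : b ∉ insert a G := by simp [hbG, hba]
    have hQaa : (insert a G).erase a = G := Finset.erase_insert haG
    have hQbb : (insert b G).erase b = G := Finset.erase_insert hbG
    have hterm : ∀ i ∈ G,
        Ring.inverse (∏ l ∈ (insert a (insert b G)).erase i, (x i - x l)) =
        Ring.inverse e *
          (Ring.inverse (∏ l ∈ (insert b G).erase i, (x i - x l)) -
           Ring.inverse (∏ l ∈ (insert a G).erase i, (x i - x l))) := by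
      intro i hi
      have hiF : i ∈ F := hGF hi
      have hia : i ≠ a := ne_of_mem_of_not_mem hi haG
      have hib : i ≠ b := ne_of_mem_of_not_mem hi hbG
      have hp : IsUnit (x i - x a) := hu i hiF a ha hia
      have hq : IsUnit (x i - x b) := hu i hiF b hbF hib
      have hpe : (x i - x a) - (x i - x b) = e := by rw [hedef]; ring
      have hpq : IsUnit ((x i - x a) - (x i - x b)) := by rw [hpe]; exact he
      have haGi : a ∉ G.erase i := fun h => haG (Finset.erase_subset _ _ h)
      have hbGi : b ∉ G.erase i := fun h => hbG (Finset.erase_subset _ _ h)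
      have haI : a ∉ insert b (G.erase i) := by simp [haGi, hba.symm]
      have h2 : (insert b G).erase i = insert b (G.erase i) :=
        Finset.erase_insert_of_ne hib.symm
      have h3 : (insert a G).erase i = insert a (G.erase i) :=
        Finset.erase_insert_of_ne hia.symm
      have hEi : (insert a (insert b G)).erase i = insert a (insert b (G.erase i)) := by
        rw [Finset.erase_insert_of_ne hia.symm, Finset.erase_insert_of_ne hib.symm]
      rw [hEi, h2, h3]
      simp only [Finset.prod_insert haI, Finset.prod_insert hbGi, Finset.prod_insert haGi,
        Ring.mul_inverse_rev]
      have hip := inv_pair hp hq hpq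
      rw [hpe] at hip
      linear_combination (Ring.inverse (∏ l ∈ G.erase i, (x i - x l))) * hip
    have hsum : ∑ i ∈ F, Ring.inverse (∏ l ∈ F.erase i, (x i - x l)) =
        Ring.inverse e *
          ((∑ i ∈ insert b G, Ring.inverse (∏ l ∈ (insert b G).erase i, (x i - x l))) -
           (∑ i ∈ insert a G, Ring.inverse (∏ l ∈ (insert a G).erase i, (x i - x l)))) := by
      conv_lhs => rw [hF]
      rw [Finset.sum_insert hanb, Finset.sum_insert hbG, hEa, hEb]
      rw [Finset.sum_congr rfl hterm, ← Finset.mul_sum, Finset.sum_sub_distrib]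
      rw [Finset.sum_insert haG, Finset.sum_insert hbG, hQaa, hQbb]
      rw [Finset.prod_insert hbG, Ring.mul_inverse_rev]
      rw [Finset.prod_insert haG, Ring.mul_inverse_rev]
      have hanegE : x a - x b = -e := by rw [hedef]; ring
      rw [hanegE, inverse_neg' he]
      ring
    rw [hsum]
    by_cases hGe : G = ∅
    · rw [hGe]
      simp
    · have hGne : G.Nonempty := Finset.nonempty_iff_ne_empty.mpr hGe
      have hGc : 1 ≤ G.card := Finset.card_pos.mpr hGne
      have hsubb : insert b G ⊂ F := by rw [← hFa]; exact Finset.erase_ssubset ha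
      have hsuba : insert a G ⊂ F := by
        constructor
        · intro l hl
          rcases Finset.mem_insert.mp hl with h | h
          · exact h ▸ ha
          · exact hGF h
        · intro hsub
          exact hbGa (hsub hbF)
      have hZb := ih _ hsubb (by rw [Finset.card_insert_of_notMem hbG]; omega)
        (fun i hi j hj hij => hu i (hsubb.1 hi) j (hsubb.1 hj) hij)
      have hZa := ih _ hsuba (by rw [Finset.card_insert_of_notMem haG]; omega)
        (fun i hi j hj hij => hu i (hsuba.1 hi) j (hsuba.1 hj) hij)
      rw [hZa, hZb]; ring

lemma isUnit_prod' {K : Type*} [CommRing K] {ι : Type*} (F : Finset ι) (f : ι → K)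
    (h : ∀ i ∈ F, IsUnit (f i)) : IsUnit (∏ l ∈ F, f l) :=
  Finset.prod_induction f IsUnit (fun _ _ => IsUnit.mul) isUnit_one h


/-- The generalized divided difference `f^⟨k⟩(v; s)` of a map `f : V → W`:
`∑_{i} (∏_{j ≠ i} (s i - s j))⁻¹ • f (v 0 + ∑_{1 ≤ j ≤ i} (∏_{ℓ < j} (s i - s ℓ)) • v j)`. -/
noncomputable def gendd {K V W : Type*} [CommRing K]
    [AddCommGroup V] [Module K V] [AddCommGroup W] [Module K W]
    {k : ℕ} (f : V → W) (v : Fin (k + 1) → V) (s : Fin (k + 1) → K) : W :=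
  ∑ i : Fin (k + 1),
    Ring.inverse (∏ j ∈ Finset.univ.erase i, (s i - s j)) •
      f (∑ j ∈ Finset.Iic i, (∏ ℓ ∈ Finset.Iio j, (s i - s ℓ)) • v j)

theorem stmt15 {K V : Type*} [CommRing K] [AddCommGroup V] [Module K V]
    {k : ℕ} (v : Fin (k + 1) → V) (s : Fin (k + 1) → K)
    (hs : ∀ i j, i ≠ j → IsUnit (s i - s j)) :
    gendd (id : V → V) v s = v (Fin.last k) := by
  unfold gendd
  simp only [id_eq, Finset.smul_sum, smul_smul]
  have hswap : ∀ (g : Fin (k+1) → Fin (k+1) → V),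
      ∑ i : Fin (k+1), ∑ j ∈ Finset.Iic i, g i j =
      ∑ j : Fin (k+1), ∑ i ∈ Finset.Ici j, g i j := by
    intro g
    calc ∑ i : Fin (k+1), ∑ j ∈ Finset.Iic i, g i j
        = ∑ i : Fin (k+1), ∑ j : Fin (k+1), if j ≤ i then g i j else 0 := by
          refine Finset.sum_congr rfl fun i _ => ?_
          rw [← Finset.sum_filter]
          congr 1
          ext j; simp
      _ = ∑ j : Fin (k+1), ∑ i : Fin (k+1), if j ≤ i then g i j else 0 := Finset.sum_comm
      _ = ∑ j : Fin (k+1), ∑ i ∈ Finset.Ici j, g i j := by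
          refine Finset.sum_congr rfl fun j _ => ?_
          rw [← Finset.sum_filter]
          congr 1
          ext i; simp
  rw [hswap]
  have hcoef : ∀ j : Fin (k+1),
      ∑ i ∈ Finset.Ici j,
        Ring.inverse (∏ l ∈ Finset.univ.erase i, (s i - s l)) * ∏ l ∈ Finset.Iio j, (s i - s l)
      = if j = Fin.last k then 1 else 0 := by
    intro j
    have hstep : ∀ i ∈ Finset.Ici j,
        Ring.inverse (∏ l ∈ Finset.univ.erase i, (s i - s l)) * ∏ l ∈ Finset.Iio j, (s i - s l)
        = Ring.inverse (∏ l ∈ (Finset.Ici j).erase i, (s i - s l)) := by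
      intro i hi
      have hji : j ≤ i := Finset.mem_Ici.mp hi
      have hdisj : Disjoint (Finset.Iio j) ((Finset.Ici j).erase i) := by
        rw [Finset.disjoint_left]
        intro l hl hl'
        have := Finset.mem_Iio.mp hl
        have := Finset.mem_Ici.mp (Finset.mem_erase.mp hl').2
        exact absurd (lt_of_lt_of_le ‹l < j› ‹j ≤ l›) (lt_irrefl l)
      have hset : (Finset.univ.erase i : Finset (Fin (k+1))) =
          (Finset.Iio j).disjUnion ((Finset.Ici j).erase i) hdisj := by
        ext l
        simp only [Finset.mem_erase, Finset.mem_univ, and_true, Finset.mem_disjUnion,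
          Finset.mem_Iio, Finset.mem_Ici, Fin.lt_def, Fin.le_def, Fin.ext_iff, ne_eq]
        have : (j : ℕ) ≤ i := hji
        omega
      have hA : IsUnit (∏ l ∈ Finset.Iio j, (s i - s l)) := by
        apply isUnit_prod'
        intro l hl
        have : l < j := Finset.mem_Iio.mp hl
        exact hs i l (by intro h; subst h; exact absurd (lt_of_lt_of_le this hji) (lt_irrefl _))
      rw [hset, Finset.prod_disjUnion, Ring.mul_inverse_rev]
      rw [mul_assoc, Ring.inverse_mul_cancel _ hA, mul_one]
    rw [Finset.sum_congr rfl hstep]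
    by_cases hj : j = Fin.last k
    · subst hj
      have : Finset.Ici (Fin.last k) = {Fin.last k} := by
        ext l
        simp [Fin.le_def, Fin.ext_iff]
        omega
      rw [this]
      simp
    · rw [if_neg hj]
      apply key
      · rw [Fin.card_Ici]
        have : (j : ℕ) < k := by
          have := j.isLt
          have : (j : ℕ) ≠ k := fun h => hj (Fin.ext (by simp [h]))
          omega
        omega
      · exact fun i _ l _ hil => hs i l hil
  calc ∑ j : Fin (k+1), ∑ i ∈ Finset.Ici j,
        (Ring.inverse (∏ l ∈ Finset.univ.erase i, (s i - s l)) *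
          ∏ l ∈ Finset.Iio j, (s i - s l)) • v j
      = ∑ j : Fin (k+1), (if j = Fin.last k then (1:K) else 0) • v j := by
        refine Finset.sum_congr rfl fun j _ => ?_
        rw [← Finset.sum_smul, hcoef]
    _ = v (Fin.last k) := by
        simp [ite_smul]
end

section
/- The limited expansion holds: for non-singular s and any map f, f(v₀ + Σ_{j=1}^{k} ∏_{ℓ=0}^{j−1}(s_k − s_ℓ)v_j) = f(v₀) + Σ_{j=1}^{k} ∏_{ℓ=0}^{j−1}(s_k − s_ℓ)·f^{⟨j⟩}(v₀,…,v_j; s₀,…,s_j). -/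
section aux

variable {K V W : Type*} [CommRing K]
    [AddCommGroup V] [Module K V] [AddCommGroup W] [Module K W]

private lemma unit_prod (s : Finset ℕ) (g : ℕ → K) (h : ∀ i ∈ s, IsUnit (g i)) :
    IsUnit (∏ i ∈ s, g i) :=
  Finset.prod_induction g IsUnit (fun _ _ => IsUnit.mul) isUnit_one h

/-- The key scalar identity. -/
private lemma key_scalar (k : ℕ) (t : ℕ → K)
    (ht : ∀ i j, i ≤ k → j ≤ k → i ≠ j → IsUnit (t i - t j)) (i : ℕ) (hik : i ≤ k) :
    ∑ j ∈ Finset.Icc i k, (∏ ℓ ∈ Finset.range j, (t k - t ℓ)) *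
        Ring.inverse (∏ m ∈ (Finset.range (j + 1)).erase i, (t i - t m)) =
      if i = k then 1 else 0 := by
  set D : ℕ → K := fun j => ∏ m ∈ (Finset.range (j + 1)).erase i, (t i - t m) with hD
  set P : ℕ → K := fun j => ∏ ℓ ∈ (Finset.range (j + 1)).erase i, (t k - t ℓ) with hP
  have hDu : ∀ j, j ≤ k → IsUnit (D j) := by
    intro j hj
    refine unit_prod _ _ fun m hm => ?_
    simp only [Finset.mem_erase, Finset.mem_range] at hm
    exact ht i m hik (by omega) (Ne.symm hm.1)
  have hmain : ∀ n, i ≤ n → n ≤ k →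
      (∑ j ∈ Finset.Icc i n, (∏ ℓ ∈ Finset.range j, (t k - t ℓ)) * Ring.inverse (D j)) =
        P n * Ring.inverse (D n) := by
    intro n hin hnk
    induction n, hin using Nat.le_induction with
    | base =>
      rw [Finset.Icc_self, Finset.sum_singleton]
      congr 1
      have h0 : (Finset.range (i + 1)).erase i = Finset.range i := by
        rw [Finset.range_add_one, Finset.erase_insert (by simp)]
      simp only [hP, h0]
    | succ n hin ih =>
      rw [Finset.sum_Icc_succ_top (by omega), ih (by omega)]
      have hnotmem : n + 1 ∉ (Finset.range (n + 1)).erase i := by simp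
      have hsetD : (Finset.range (n + 1 + 1)).erase i
          = insert (n + 1) ((Finset.range (n + 1)).erase i) := by
        rw [Finset.range_add_one, Finset.erase_insert_of_ne (by omega)]
      have hDsucc : D (n + 1) = (t i - t (n + 1)) * D n := by
        rw [hD]; simp only; rw [hsetD, Finset.prod_insert hnotmem]
      have hPsucc : P (n + 1) = (t k - t (n + 1)) * P n := by
        rw [hP]; simp only; rw [hsetD, Finset.prod_insert hnotmem]
      have hamem : i ∈ Finset.range (n + 1 + 1) := by simp; omega
      have hasucc : (∏ ℓ ∈ Finset.range (n + 1), (t k - t ℓ)) = (t k - t i) * P n := by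
        have : Finset.range (n + 1) = insert i ((Finset.range (n + 1)).erase i) :=
          (Finset.insert_erase (by simp; omega)).symm
        rw [this, Finset.prod_insert (by simp)]
      have hu1 : IsUnit (t i - t (n + 1)) := ht i (n + 1) hik (by omega) (by omega)
      have hu2 : IsUnit (D n) := hDu n (by omega)
      have hu3 : IsUnit (D (n + 1)) := hDu (n + 1) (by omega)
      refine hu3.mul_right_cancel ?_
      have h1 : Ring.inverse (D (n + 1)) * D (n + 1) = 1 :=
        Ring.inverse_mul_cancel _ hu3
      have h2 : Ring.inverse (D n) * D n = 1 := Ring.inverse_mul_cancel _ hu2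
      rw [hasucc]
      calc (P n * Ring.inverse (D n) + (t k - t i) * P n * Ring.inverse (D (n + 1)))
            * D (n + 1)
          = P n * (t i - t (n + 1)) * (Ring.inverse (D n) * D n)
              + (t k - t i) * P n * (Ring.inverse (D (n + 1)) * D (n + 1)) := by
            rw [hDsucc]; ring
        _ = P (n + 1) * (Ring.inverse (D (n + 1)) * D (n + 1)) := by
            rw [h1, h2, hPsucc]; ring
        _ = P (n + 1) * Ring.inverse (D (n + 1)) * D (n + 1) := by ring
  rw [hmain k hik le_rfl]
  by_cases hik' : i = k
  · subst hik'
    simp only [if_pos rfl]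
    have hPD : P i = D i := by
      rw [hP, hD]
    rw [hPD]
    exact Ring.mul_inverse_cancel _ (hDu i le_rfl)
  · rw [if_neg hik']
    have : P k = 0 := by
      rw [hP]
      refine Finset.prod_eq_zero (i := k) (by simp; omega) (by simp)
    rw [this, zero_mul]

/-- The ℕ-indexed version of the limited expansion. -/
private lemma nat_version (k : ℕ) (t : ℕ → K) (w : ℕ → V) (f : V → W)
    (ht : ∀ i j, i ≤ k → j ≤ k → i ≠ j → IsUnit (t i - t j)) :
    f (∑ m ∈ Finset.range (k + 1), (∏ ℓ ∈ Finset.range m, (t k - t ℓ)) • w m) =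
      ∑ j ∈ Finset.range (k + 1), (∏ ℓ ∈ Finset.range j, (t k - t ℓ)) •
        ∑ i ∈ Finset.range (j + 1),
          Ring.inverse (∏ m ∈ (Finset.range (j + 1)).erase i, (t i - t m)) •
            f (∑ m ∈ Finset.range (i + 1), (∏ ℓ ∈ Finset.range m, (t i - t ℓ)) • w m) := by
  set x : ℕ → W := fun i =>
    f (∑ m ∈ Finset.range (i + 1), (∏ ℓ ∈ Finset.range m, (t i - t ℓ)) • w m) with hx
  set a : ℕ → K := fun j => ∏ ℓ ∈ Finset.range j, (t k - t ℓ) with ha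
  set c : ℕ → ℕ → K := fun i j =>
    Ring.inverse (∏ m ∈ (Finset.range (j + 1)).erase i, (t i - t m)) with hc
  have filt1 : ∀ j ∈ Finset.range (k + 1),
      Finset.filter (fun i => i ≤ j) (Finset.range (k + 1)) = Finset.range (j + 1) := by
    intro j hj
    simp only [Finset.mem_range] at hj
    ext m; simp only [Finset.mem_filter, Finset.mem_range]; omega
  have filt2 : ∀ i, Finset.filter (fun j => i ≤ j) (Finset.range (k + 1))
      = Finset.Icc i k := by
    intro i
    ext m; simp only [Finset.mem_filter, Finset.mem_range, Finset.mem_Icc]; omega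
  have step1 : ∑ j ∈ Finset.range (k + 1), a j • ∑ i ∈ Finset.range (j + 1), c i j • x i
      = ∑ i ∈ Finset.range (k + 1), (∑ j ∈ Finset.Icc i k, a j * c i j) • x i := by
    calc ∑ j ∈ Finset.range (k + 1), a j • ∑ i ∈ Finset.range (j + 1), c i j • x i
        = ∑ j ∈ Finset.range (k + 1), ∑ i ∈ Finset.range (k + 1),
            (if i ≤ j then (a j * c i j) • x i else 0) := by
          refine Finset.sum_congr rfl fun j hj => ?_
          rw [Finset.sum_ite, Finset.sum_const_zero, add_zero, filt1 j hj,
            Finset.smul_sum]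
          exact Finset.sum_congr rfl fun i _ => smul_smul (a j) (c i j) (x i)
      _ = ∑ i ∈ Finset.range (k + 1), ∑ j ∈ Finset.range (k + 1),
            (if i ≤ j then (a j * c i j) • x i else 0) := Finset.sum_comm
      _ = ∑ i ∈ Finset.range (k + 1), (∑ j ∈ Finset.Icc i k, a j * c i j) • x i := by
          refine Finset.sum_congr rfl fun i _ => ?_
          rw [Finset.sum_ite, Finset.sum_const_zero, add_zero, filt2 i,
            ← Finset.sum_smul]
  rw [step1]
  have step2 : ∀ i ∈ Finset.range (k + 1),
      (∑ j ∈ Finset.Icc i k, a j * c i j) • x i = (if i = k then 1 else (0:K)) • x i := by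
    intro i hi
    rw [key_scalar k t ht i (by simpa [Nat.lt_succ_iff] using hi)]
  rw [Finset.sum_congr rfl step2]
  have : ∀ i ∈ Finset.range (k + 1),
      (if i = k then (1:K) else 0) • x i = if i = k then x i else 0 := by
    intro i _; split <;> simp
  rw [Finset.sum_congr rfl this, Finset.sum_ite_eq' (Finset.range (k + 1)) k x,
    if_pos (by simp)]


private lemma sum_univ_fin {M : Type*} [AddCommMonoid M] {n : ℕ} (G : Fin n → M) (G' : ℕ → M)
    (h : ∀ j : Fin n, G j = G' j.val) : ∑ j : Fin n, G j = ∑ m ∈ Finset.range n, G' m := by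
  rw [Finset.sum_congr rfl fun j _ => h j]
  exact Fin.sum_univ_eq_sum_range G' n

private lemma prod_Iio_fin {M : Type*} [CommMonoid M] {n : ℕ} (j : Fin n) (g' : ℕ → M) :
    ∏ ℓ ∈ Finset.Iio j, g' ℓ.val = ∏ m ∈ Finset.range j.val, g' m := by
  rw [← Nat.Iio_eq_range, ← Fin.map_valEmbedding_Iio, Finset.prod_map]
  rfl

private lemma sum_Iic_fin {M : Type*} [AddCommMonoid M] {n : ℕ} (i : Fin n) (F : ℕ → M) :
    ∑ m ∈ Finset.Iic i, F m.val = ∑ m ∈ Finset.range (i.val + 1), F m := by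
  have h1 : Finset.range (i.val + 1) = Finset.Iic (i : ℕ) := by
    ext m; simp [Nat.lt_succ_iff]
  rw [h1, ← Fin.map_valEmbedding_Iic, Finset.sum_map]
  rfl

private lemma prod_erase_fin {M : Type*} [CommMonoid M] {n : ℕ} (i : Fin n) (g' : ℕ → M) :
    ∏ m ∈ Finset.univ.erase i, g' m.val = ∏ m ∈ (Finset.range n).erase i.val, g' m := by
  calc ∏ m ∈ Finset.univ.erase i, g' m.val
      = ∏ m ∈ (Finset.univ.erase i).map Fin.valEmbedding, g' m :=
        (Finset.prod_map (Finset.univ.erase i) Fin.valEmbedding g').symm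
    _ = ∏ m ∈ (Finset.range n).erase i.val, g' m := by
        rw [Finset.map_erase, Fin.map_valEmbedding_univ, ← Nat.Iio_eq_range]
        rfl

private lemma gendd_eq_nat {K V W : Type*} [CommRing K]
    [AddCommGroup V] [Module K V] [AddCommGroup W] [Module K W]
    (k' : ℕ) (t : ℕ → K) (w : ℕ → V) (f : V → W) :
    gendd f (fun i : Fin (k' + 1) => w i.val) (fun i : Fin (k' + 1) => t i.val) =
      ∑ i ∈ Finset.range (k' + 1),
        Ring.inverse (∏ m ∈ (Finset.range (k' + 1)).erase i, (t i - t m)) •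
          f (∑ m ∈ Finset.range (i + 1), (∏ ℓ ∈ Finset.range m, (t i - t ℓ)) • w m) := by
  unfold gendd
  refine sum_univ_fin _ _ fun i => ?_
  have h1 : ∏ m ∈ Finset.univ.erase i, (t i.val - t m.val)
      = ∏ m ∈ (Finset.range (k' + 1)).erase i.val, (t i.val - t m) :=
    prod_erase_fin i (fun m => t i.val - t m)
  have h2 : ∀ m : Fin (k' + 1), (∏ ℓ ∈ Finset.Iio m, (t i.val - t ℓ.val))
      = ∏ ℓ ∈ Finset.range m.val, (t i.val - t ℓ) :=
    fun m => prod_Iio_fin m (fun ℓ => t i.val - t ℓ)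
  have h3 : ∑ m ∈ Finset.Iic i, (∏ ℓ ∈ Finset.Iio m, (t i.val - t ℓ.val)) • w m.val
      = ∑ m ∈ Finset.range (i.val + 1),
          (∏ ℓ ∈ Finset.range m, (t i.val - t ℓ)) • w m := by
    rw [Finset.sum_congr rfl fun m _ => by rw [h2 m]]
    exact sum_Iic_fin i (fun m => (∏ ℓ ∈ Finset.range m, (t i.val - t ℓ)) • w m)
  rw [h1, h3]

end aux

theorem stmt17 {K V W : Type*} [CommRing K]
    [AddCommGroup V] [Module K V] [AddCommGroup W] [Module K W]
    {k : ℕ} (f : V → W) (v : Fin (k + 1) → V) (s : Fin (k + 1) → K)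
    (hs : ∀ i j, i ≠ j → IsUnit (s i - s j)) :
    f (∑ j : Fin (k + 1), (∏ ℓ ∈ Finset.Iio j, (s (Fin.last k) - s ℓ)) • v j) =
      ∑ j : Fin (k + 1), (∏ ℓ ∈ Finset.Iio j, (s (Fin.last k) - s ℓ)) •
        gendd f (fun i : Fin ((j : ℕ) + 1) => v (Fin.castLE j.isLt i))
          (fun i : Fin ((j : ℕ) + 1) => s (Fin.castLE j.isLt i)) := by
  classical
  set t : ℕ → K := fun m => if h : m < k + 1 then s ⟨m, h⟩ else 0 with htdef
  set w : ℕ → V := fun m => if h : m < k + 1 then v ⟨m, h⟩ else 0 with hwdef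
  have hts : ∀ i : Fin (k + 1), t i.val = s i := by
    intro i; simp only [htdef, i.isLt, dif_pos, Fin.eta]
  have hws : ∀ i : Fin (k + 1), w i.val = v i := by
    intro i; simp only [hwdef, i.isLt, dif_pos, Fin.eta]
  have ht : ∀ i j, i ≤ k → j ≤ k → i ≠ j → IsUnit (t i - t j) := by
    intro i j hi hj hne
    have h1 : t i = s ⟨i, by omega⟩ := hts ⟨i, by omega⟩
    have h2 : t j = s ⟨j, by omega⟩ := hts ⟨j, by omega⟩
    rw [h1, h2]
    exact hs _ _ (by simp only [ne_eq, Fin.mk.injEq]; omega)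
  have hPk : ∀ j : Fin (k + 1),
      (∏ ℓ ∈ Finset.Iio j, (s (Fin.last k) - s ℓ)) = ∏ m ∈ Finset.range j.val, (t k - t m) := by
    intro j
    have : ∀ ℓ : Fin (k + 1), s (Fin.last k) - s ℓ = (fun m => t k - t m) ℓ.val := by
      intro ℓ
      show s (Fin.last k) - s ℓ = t k - t ℓ.val
      rw [hts ℓ]
      have : t k = s (Fin.last k) := hts (Fin.last k)
      rw [this]
    rw [Finset.prod_congr rfl fun ℓ _ => this ℓ]
    exact prod_Iio_fin j (fun m => t k - t m)
  have hLHS : (∑ j : Fin (k + 1), (∏ ℓ ∈ Finset.Iio j, (s (Fin.last k) - s ℓ)) • v j)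
      = ∑ m ∈ Finset.range (k + 1), (∏ ℓ ∈ Finset.range m, (t k - t ℓ)) • w m := by
    refine sum_univ_fin _ _ fun j => ?_
    rw [hPk j, hws j]
  have hgendd : ∀ j : Fin (k + 1),
      gendd f (fun i : Fin ((j : ℕ) + 1) => v (Fin.castLE j.isLt i))
          (fun i : Fin ((j : ℕ) + 1) => s (Fin.castLE j.isLt i))
        = ∑ i ∈ Finset.range (j.val + 1),
            Ring.inverse (∏ m ∈ (Finset.range (j.val + 1)).erase i, (t i - t m)) •
              f (∑ m ∈ Finset.range (i + 1), (∏ ℓ ∈ Finset.range m, (t i - t ℓ)) • w m) := by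
    intro j
    have hv' : (fun i : Fin ((j : ℕ) + 1) => v (Fin.castLE j.isLt i))
        = fun i : Fin ((j : ℕ) + 1) => w i.val := by
      funext i
      exact (hws (Fin.castLE j.isLt i)).symm
    have hs' : (fun i : Fin ((j : ℕ) + 1) => s (Fin.castLE j.isLt i))
        = fun i : Fin ((j : ℕ) + 1) => t i.val := by
      funext i
      exact (hts (Fin.castLE j.isLt i)).symm
    rw [hv', hs']
    exact gendd_eq_nat j.val t w f
  have hRHS : (∑ j : Fin (k + 1), (∏ ℓ ∈ Finset.Iio j, (s (Fin.last k) - s ℓ)) •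
        gendd f (fun i : Fin ((j : ℕ) + 1) => v (Fin.castLE j.isLt i))
          (fun i : Fin ((j : ℕ) + 1) => s (Fin.castLE j.isLt i)))
      = ∑ j ∈ Finset.range (k + 1), (∏ ℓ ∈ Finset.range j, (t k - t ℓ)) •
          ∑ i ∈ Finset.range (j + 1),
            Ring.inverse (∏ m ∈ (Finset.range (j + 1)).erase i, (t i - t m)) •
              f (∑ m ∈ Finset.range (i + 1), (∏ ℓ ∈ Finset.range m, (t i - t ℓ)) • w m) := by
    refine sum_univ_fin _ _ fun j => ?_
    rw [hPk j, hgendd j]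
  rw [hLHS, hRHS]
  exact nat_version k t w f ht
end

section
/- Let K be a commutative ring, and define A = K[X₁,X₂]/(X₁² − t₁X₁, X₂² − t₂X₂ − t₁₂X₁X₂) for t₁, t₂, t₁₂ ∈ K. Then A is a free K-module of rank 4 with basis the classes of 1, X₁, X₂, X₁X₂, and the relations X₂·(X₁X₂) = (t₂ + t₁t₁₂)·X₁X₂ and (X₁X₂)² = (t₁t₂ + t₁²t₁₂)·X₁X₂ hold in A. -/
namespace Stmt18Aux

open MvPolynomial

@[ext]
structure Q4 (K : Type*) (t₁ t₂ t₁₂ : K) where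
  a : K
  b : K
  c : K
  d : K

namespace Q4

variable {K : Type*} [CommRing K] (t₁ t₂ t₁₂ : K)

instance : Zero (Q4 K t₁ t₂ t₁₂) := ⟨⟨0,0,0,0⟩⟩
instance : One (Q4 K t₁ t₂ t₁₂) := ⟨⟨1,0,0,0⟩⟩
instance : Add (Q4 K t₁ t₂ t₁₂) := ⟨fun s t => ⟨s.a+t.a, s.b+t.b, s.c+t.c, s.d+t.d⟩⟩
instance : Neg (Q4 K t₁ t₂ t₁₂) := ⟨fun s => ⟨-s.a, -s.b, -s.c, -s.d⟩⟩
instance : Sub (Q4 K t₁ t₂ t₁₂) := ⟨fun s t => ⟨s.a-t.a, s.b-t.b, s.c-t.c, s.d-t.d⟩⟩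
instance : Mul (Q4 K t₁ t₂ t₁₂) := ⟨fun s t =>
  ⟨s.a*t.a,
   s.a*t.b + s.b*t.a + t₁*(s.b*t.b),
   s.a*t.c + s.c*t.a + t₂*(s.c*t.c),
   s.a*t.d + s.d*t.a + s.b*t.c + s.c*t.b + t₁₂*(s.c*t.c)
     + t₁*(s.b*t.d + s.d*t.b) + (t₂+t₁*t₁₂)*(s.c*t.d + s.d*t.c)
     + t₁*(t₂+t₁*t₁₂)*(s.d*t.d)⟩⟩

variable {t₁ t₂ t₁₂}

@[simp] lemma zero_a : (0 : Q4 K t₁ t₂ t₁₂).a = 0 := rfl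
@[simp] lemma zero_b : (0 : Q4 K t₁ t₂ t₁₂).b = 0 := rfl
@[simp] lemma zero_c : (0 : Q4 K t₁ t₂ t₁₂).c = 0 := rfl
@[simp] lemma zero_d : (0 : Q4 K t₁ t₂ t₁₂).d = 0 := rfl
@[simp] lemma one_a : (1 : Q4 K t₁ t₂ t₁₂).a = 1 := rfl
@[simp] lemma one_b : (1 : Q4 K t₁ t₂ t₁₂).b = 0 := rfl
@[simp] lemma one_c : (1 : Q4 K t₁ t₂ t₁₂).c = 0 := rfl
@[simp] lemma one_d : (1 : Q4 K t₁ t₂ t₁₂).d = 0 := rfl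
@[simp] lemma add_a (s t : Q4 K t₁ t₂ t₁₂) : (s+t).a = s.a + t.a := rfl
@[simp] lemma add_b (s t : Q4 K t₁ t₂ t₁₂) : (s+t).b = s.b + t.b := rfl
@[simp] lemma add_c (s t : Q4 K t₁ t₂ t₁₂) : (s+t).c = s.c + t.c := rfl
@[simp] lemma add_d (s t : Q4 K t₁ t₂ t₁₂) : (s+t).d = s.d + t.d := rfl
@[simp] lemma neg_a (s : Q4 K t₁ t₂ t₁₂) : (-s).a = -s.a := rfl
@[simp] lemma neg_b (s : Q4 K t₁ t₂ t₁₂) : (-s).b = -s.b := rfl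
@[simp] lemma neg_c (s : Q4 K t₁ t₂ t₁₂) : (-s).c = -s.c := rfl
@[simp] lemma neg_d (s : Q4 K t₁ t₂ t₁₂) : (-s).d = -s.d := rfl
@[simp] lemma sub_a (s t : Q4 K t₁ t₂ t₁₂) : (s-t).a = s.a - t.a := rfl
@[simp] lemma sub_b (s t : Q4 K t₁ t₂ t₁₂) : (s-t).b = s.b - t.b := rfl
@[simp] lemma sub_c (s t : Q4 K t₁ t₂ t₁₂) : (s-t).c = s.c - t.c := rfl
@[simp] lemma sub_d (s t : Q4 K t₁ t₂ t₁₂) : (s-t).d = s.d - t.d := rfl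
@[simp] lemma mul_a (s t : Q4 K t₁ t₂ t₁₂) : (s*t).a = s.a*t.a := rfl
@[simp] lemma mul_b (s t : Q4 K t₁ t₂ t₁₂) : (s*t).b = s.a*t.b + s.b*t.a + t₁*(s.b*t.b) := rfl
@[simp] lemma mul_c (s t : Q4 K t₁ t₂ t₁₂) : (s*t).c = s.a*t.c + s.c*t.a + t₂*(s.c*t.c) := rfl
@[simp] lemma mul_d (s t : Q4 K t₁ t₂ t₁₂) : (s*t).d =
    s.a*t.d + s.d*t.a + s.b*t.c + s.c*t.b + t₁₂*(s.c*t.c)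
     + t₁*(s.b*t.d + s.d*t.b) + (t₂+t₁*t₁₂)*(s.c*t.d + s.d*t.c)
     + t₁*(t₂+t₁*t₁₂)*(s.d*t.d) := rfl

instance : CommRing (Q4 K t₁ t₂ t₁₂) where
  add_assoc := by intros; ext <;> simp <;> ring
  zero_add := by intros; ext <;> simp
  add_zero := by intros; ext <;> simp
  add_comm := by intros; ext <;> simp <;> ring
  neg_add_cancel := by intros; ext <;> simp
  mul_assoc := by intros; ext <;> simp <;> ring
  one_mul := by intros; ext <;> simp
  mul_one := by intros; ext <;> simp
  left_distrib := by intros; ext <;> simp <;> ring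
  right_distrib := by intros; ext <;> simp <;> ring
  zero_mul := by intros; ext <;> simp
  mul_zero := by intros; ext <;> simp
  mul_comm := by intros; ext <;> simp <;> ring
  nsmul := nsmulRec
  zsmul := zsmulRec
  sub := Sub.sub
  sub_eq_add_neg := by intros; ext <;> simp [sub_eq_add_neg]

variable (t₁ t₂ t₁₂)

def CHom : K →+* Q4 K t₁ t₂ t₁₂ where
  toFun a := ⟨a, 0, 0, 0⟩
  map_one' := rfl
  map_mul' x y := by ext <;> simp
  map_zero' := rfl
  map_add' x y := by ext <;> simp

instance : Algebra K (Q4 K t₁ t₂ t₁₂) := (CHom t₁ t₂ t₁₂).toAlgebra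

variable {t₁ t₂ t₁₂}

lemma algebraMap_apply (x : K) : algebraMap K (Q4 K t₁ t₂ t₁₂) x = ⟨x,0,0,0⟩ := rfl
@[simp] lemma algebraMap_a (x : K) : (algebraMap K (Q4 K t₁ t₂ t₁₂) x).a = x := rfl
@[simp] lemma algebraMap_b (x : K) : (algebraMap K (Q4 K t₁ t₂ t₁₂) x).b = 0 := rfl
@[simp] lemma algebraMap_c (x : K) : (algebraMap K (Q4 K t₁ t₂ t₁₂) x).c = 0 := rfl
@[simp] lemma algebraMap_d (x : K) : (algebraMap K (Q4 K t₁ t₂ t₁₂) x).d = 0 := rfl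

@[simp] lemma smul_a (x : K) (s : Q4 K t₁ t₂ t₁₂) : (x • s).a = x * s.a := by
  rw [Algebra.smul_def]; simp
@[simp] lemma smul_b (x : K) (s : Q4 K t₁ t₂ t₁₂) : (x • s).b = x * s.b := by
  rw [Algebra.smul_def]; simp
@[simp] lemma smul_c (x : K) (s : Q4 K t₁ t₂ t₁₂) : (x • s).c = x * s.c := by
  rw [Algebra.smul_def]; simp
@[simp] lemma smul_d (x : K) (s : Q4 K t₁ t₂ t₁₂) : (x • s).d = x * s.d := by
  rw [Algebra.smul_def]; simp

end Q4

section Main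

variable {K : Type*} [CommRing K] (t₁ t₂ t₁₂ : K)

noncomputable def r1 : MvPolynomial (Fin 2) K := X 0 ^ 2 - C t₁ * X 0
noncomputable def r2 : MvPolynomial (Fin 2) K :=
  X 1 ^ 2 - C t₂ * X 1 - C t₁₂ * (X 0 * X 1)

noncomputable def I' : Ideal (MvPolynomial (Fin 2) K) := Ideal.span {r1 t₁, r2 t₂ t₁₂}

lemma r1_mem : r1 t₁ ∈ I' t₁ t₂ t₁₂ (K := K) := Ideal.subset_span (by simp)
lemma r2_mem : r2 t₂ t₁₂ ∈ I' t₁ t₂ t₁₂ (K := K) := Ideal.subset_span (by simp)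

lemma comb_mem (q1 q2 : MvPolynomial (Fin 2) K) :
    q1 * r1 t₁ + q2 * r2 t₂ t₁₂ ∈ I' t₁ t₂ t₁₂ := by
  exact Ideal.add_mem _ (Ideal.mul_mem_left _ _ (r1_mem t₁ t₂ t₁₂))
    (Ideal.mul_mem_left _ _ (r2_mem t₁ t₂ t₁₂))

lemma quot_eq {p q : MvPolynomial (Fin 2) K}
    (q1 q2 : MvPolynomial (Fin 2) K) (h : p - q = q1 * r1 t₁ + q2 * r2 t₂ t₁₂) :
    Ideal.Quotient.mk (I' t₁ t₂ t₁₂) p = Ideal.Quotient.mk (I' t₁ t₂ t₁₂) q := by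
  rw [Ideal.Quotient.eq, h]; exact comb_mem t₁ t₂ t₁₂ q1 q2

def xx : Q4 K t₁ t₂ t₁₂ := ⟨0,1,0,0⟩
def yy : Q4 K t₁ t₂ t₁₂ := ⟨0,0,1,0⟩

noncomputable def φ : MvPolynomial (Fin 2) K →ₐ[K] Q4 K t₁ t₂ t₁₂ :=
  aeval ![xx t₁ t₂ t₁₂, yy t₁ t₂ t₁₂]

@[simp] lemma φ_X0 : φ t₁ t₂ t₁₂ (X 0 : MvPolynomial (Fin 2) K) = xx t₁ t₂ t₁₂ := by
  simp [φ]
@[simp] lemma φ_X1 : φ t₁ t₂ t₁₂ (X 1 : MvPolynomial (Fin 2) K) = yy t₁ t₂ t₁₂ := by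
  simp [φ]

lemma φ_vanish : ∀ p ∈ I' t₁ t₂ t₁₂ (K := K), φ t₁ t₂ t₁₂ p = 0 := by
  intro p hp
  refine (Ideal.span_le.2 ?_ : I' t₁ t₂ t₁₂ ≤ RingHom.ker (φ t₁ t₂ t₁₂).toRingHom) hp
  rintro q (rfl | rfl) <;>
  · simp only [SetLike.mem_coe, RingHom.mem_ker, r1, r2, AlgHom.toRingHom_eq_coe,
      RingHom.coe_coe, map_sub, map_mul, map_pow, φ_X0, φ_X1, algHom_C]
    ext <;> simp [xx, yy, pow_two] <;> ring

noncomputable def ψ : (MvPolynomial (Fin 2) K ⧸ I' t₁ t₂ t₁₂) →ₐ[K] Q4 K t₁ t₂ t₁₂ :=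
  Ideal.Quotient.liftₐ (I' t₁ t₂ t₁₂) (φ t₁ t₂ t₁₂) (φ_vanish t₁ t₂ t₁₂)

@[simp] lemma ψ_mk (p : MvPolynomial (Fin 2) K) :
    ψ t₁ t₂ t₁₂ (Ideal.Quotient.mk (I' t₁ t₂ t₁₂) p) = φ t₁ t₂ t₁₂ p := by
  rw [ψ, Ideal.Quotient.liftₐ_apply]; rfl

noncomputable def h0 : Q4 K t₁ t₂ t₁₂ →ₗ[K] MvPolynomial (Fin 2) K where
  toFun s := C s.a + C s.b * X 0 + C s.c * X 1 + C s.d * (X 0 * X 1)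
  map_add' s t := by simp only [Q4.add_a, Q4.add_b, Q4.add_c, Q4.add_d, map_add]; ring
  map_smul' x s := by
    simp only [Q4.smul_a, Q4.smul_b, Q4.smul_c, Q4.smul_d, map_mul, RingHom.id_apply,
      smul_eq_C_mul]
    ring

noncomputable def g : Q4 K t₁ t₂ t₁₂ →ₗ[K] (MvPolynomial (Fin 2) K ⧸ I' t₁ t₂ t₁₂) :=
  (Ideal.Quotient.mkₐ K (I' t₁ t₂ t₁₂)).toLinearMap.comp (h0 t₁ t₂ t₁₂)

@[simp] lemma g_apply (s : Q4 K t₁ t₂ t₁₂) :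
    g t₁ t₂ t₁₂ s = Ideal.Quotient.mk (I' t₁ t₂ t₁₂)
      (C s.a + C s.b * X 0 + C s.c * X 1 + C s.d * (X 0 * X 1)) := rfl

lemma ψ_g (s : Q4 K t₁ t₂ t₁₂) : ψ t₁ t₂ t₁₂ (g t₁ t₂ t₁₂ s) = s := by
  rw [g_apply, ψ_mk]
  simp only [map_add, map_mul, φ_X0, φ_X1, algHom_C]
  ext <;> simp [xx, yy] <;> ring

lemma g_φ (p : MvPolynomial (Fin 2) K) :
    g t₁ t₂ t₁₂ (φ t₁ t₂ t₁₂ p) = Ideal.Quotient.mk (I' t₁ t₂ t₁₂) p := by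
  induction p using MvPolynomial.induction_on with
  | C a => simp
  | add p q hp hq => rw [map_add, map_add, hp, hq, map_add]
  | mul_X p i hp =>
    have e1 := map_mul (φ t₁ t₂ t₁₂) p (X i)
    have e2 := map_mul (Ideal.Quotient.mk (I' t₁ t₂ t₁₂)) p (X i)
    rw [e1, e2, ← hp]
    set s := φ t₁ t₂ t₁₂ p with hs
    have hi : i = 0 ∨ i = 1 := by omega
    rcases hi with rfl | rfl
    · rw [φ_X0, g_apply]
      rw [show s * xx t₁ t₂ t₁₂ = ⟨0, s.a + t₁*s.b, 0, s.c + t₁*s.d⟩ by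
        ext <;> simp [xx] <;> ring]
      rw [g_apply, ← map_mul]
      apply quot_eq t₁ t₂ t₁₂ (-(C s.b + C s.d * X 1)) 0
      simp only [r1, r2, map_add, map_mul, map_zero]
      ring
    · rw [φ_X1, g_apply]
      rw [show s * yy t₁ t₂ t₁₂ =
          ⟨0, 0, s.a + t₂*s.c, s.b + t₁₂*s.c + (t₂+t₁*t₁₂)*s.d⟩ by
        ext <;> simp [yy] <;> ring]
      rw [g_apply, ← map_mul]
      apply quot_eq t₁ t₂ t₁₂ (-(C t₁₂ * C s.d * X 1)) (-(C s.c + C s.d * X 0))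
      simp only [r1, r2, map_add, map_mul, map_zero]
      ring

noncomputable def e2 : Q4 K t₁ t₂ t₁₂ ≃ₗ[K] (Fin 4 → K) where
  toFun s := ![s.a, s.b, s.c, s.d]
  invFun f := ⟨f 0, f 1, f 2, f 3⟩
  left_inv s := by ext <;> rfl
  right_inv f := by funext i; fin_cases i <;> rfl
  map_add' s t := by funext i; fin_cases i <;> simp
  map_smul' x s := by funext i; fin_cases i <;> simp

lemma hcomp1 : (ψ t₁ t₂ t₁₂ (K := K)).toLinearMap.comp (g t₁ t₂ t₁₂) = LinearMap.id :=
  LinearMap.ext fun s => ψ_g t₁ t₂ t₁₂ s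

lemma hcomp2 : (g t₁ t₂ t₁₂ (K := K)).comp (ψ t₁ t₂ t₁₂).toLinearMap = LinearMap.id :=
  LinearMap.ext fun q => by
    obtain ⟨p, rfl⟩ := Ideal.Quotient.mk_surjective q
    simpa using g_φ t₁ t₂ t₁₂ p

noncomputable def eqv1 : (MvPolynomial (Fin 2) K ⧸ I' t₁ t₂ t₁₂) ≃ₗ[K] Q4 K t₁ t₂ t₁₂ :=
  LinearEquiv.ofLinear (ψ t₁ t₂ t₁₂).toLinearMap (g t₁ t₂ t₁₂)
    (hcomp1 t₁ t₂ t₁₂) (hcomp2 t₁ t₂ t₁₂)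

noncomputable def eqv : (MvPolynomial (Fin 2) K ⧸ I' t₁ t₂ t₁₂) ≃ₗ[K] (Fin 4 → K) :=
  (eqv1 t₁ t₂ t₁₂).trans (e2 t₁ t₂ t₁₂)

noncomputable def B : Module.Basis (Fin 4) K (MvPolynomial (Fin 2) K ⧸ I' t₁ t₂ t₁₂) :=
  Module.Basis.ofEquivFun (eqv t₁ t₂ t₁₂)

lemma e2_symm_apply (f : Fin 4 → K) : (e2 t₁ t₂ t₁₂).symm f = ⟨f 0, f 1, f 2, f 3⟩ := rfl

lemma eqv_symm_apply (f : Fin 4 → K) :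
    (eqv t₁ t₂ t₁₂).symm f = g t₁ t₂ t₁₂ ⟨f 0, f 1, f 2, f 3⟩ := by
  rw [eqv, LinearEquiv.trans_symm, LinearEquiv.trans_apply, e2_symm_apply, eqv1,
    LinearEquiv.ofLinear_symm_apply]

lemma B_apply (i : Fin 4) : B t₁ t₂ t₁₂ i =
    g t₁ t₂ t₁₂ ⟨(Pi.single i (1:K) : Fin 4 → K) 0, (Pi.single i (1:K) : Fin 4 → K) 1,
      (Pi.single i (1:K) : Fin 4 → K) 2, (Pi.single i (1:K) : Fin 4 → K) 3⟩ := by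
  rw [B, Module.Basis.coe_ofEquivFun]; simp only [eqv_symm_apply]

lemma B0 : B t₁ t₂ t₁₂ (K := K) 0 = 1 := by
  rw [B_apply]
  simp [Pi.single_apply, g_apply]

lemma B1 : B t₁ t₂ t₁₂ (K := K) 1 = Ideal.Quotient.mk (I' t₁ t₂ t₁₂) (X 0) := by
  rw [B_apply]
  simp [Pi.single_apply, g_apply]

lemma B2 : B t₁ t₂ t₁₂ (K := K) 2 = Ideal.Quotient.mk (I' t₁ t₂ t₁₂) (X 1) := by
  rw [B_apply]
  simp [Pi.single_apply, g_apply]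

lemma B3 : B t₁ t₂ t₁₂ (K := K) 3 = Ideal.Quotient.mk (I' t₁ t₂ t₁₂) (X 0 * X 1) := by
  rw [B_apply]
  simp [Pi.single_apply, g_apply]

end Main

end Stmt18Aux

theorem stmt18 {K : Type*} [CommRing K] (t₁ t₂ t₁₂ : K) :
    let R := MvPolynomial (Fin 2) K
    let I : Ideal R := Ideal.span
      {MvPolynomial.X 0 ^ 2 - MvPolynomial.C t₁ * MvPolynomial.X 0,
       MvPolynomial.X 1 ^ 2 - MvPolynomial.C t₂ * MvPolynomial.X 1 -
         MvPolynomial.C t₁₂ * (MvPolynomial.X 0 * MvPolynomial.X 1)}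
    let mk := Ideal.Quotient.mk I
    (∃ B : Module.Basis (Fin 4) K (R ⧸ I),
      B 0 = 1 ∧ B 1 = mk (MvPolynomial.X 0) ∧ B 2 = mk (MvPolynomial.X 1) ∧
        B 3 = mk (MvPolynomial.X 0 * MvPolynomial.X 1)) ∧
    mk (MvPolynomial.X 1) * mk (MvPolynomial.X 0 * MvPolynomial.X 1) =
      (t₂ + t₁ * t₁₂) • mk (MvPolynomial.X 0 * MvPolynomial.X 1) ∧
    mk (MvPolynomial.X 0 * MvPolynomial.X 1) ^ 2 =
      (t₁ * t₂ + t₁ ^ 2 * t₁₂) • mk (MvPolynomial.X 0 * MvPolynomial.X 1) := by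
  intro R I mk
  have hsm : ∀ (u : K) (p : MvPolynomial (Fin 2) K),
      u • (Ideal.Quotient.mk (Stmt18Aux.I' t₁ t₂ t₁₂) p) =
        Ideal.Quotient.mk (Stmt18Aux.I' t₁ t₂ t₁₂) (MvPolynomial.C u * p) := by
    intro u p
    rw [← Ideal.Quotient.mkₐ_eq_mk K (Stmt18Aux.I' t₁ t₂ t₁₂), ← map_smul,
      MvPolynomial.smul_eq_C_mul]
  refine ⟨⟨Stmt18Aux.B t₁ t₂ t₁₂, ?_, ?_, ?_, ?_⟩, ?_, ?_⟩
  · exact Stmt18Aux.B0 t₁ t₂ t₁₂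
  · exact Stmt18Aux.B1 t₁ t₂ t₁₂
  · exact Stmt18Aux.B2 t₁ t₂ t₁₂
  · exact Stmt18Aux.B3 t₁ t₂ t₁₂
  · show Ideal.Quotient.mk (Stmt18Aux.I' t₁ t₂ t₁₂) (MvPolynomial.X 1) *
        Ideal.Quotient.mk (Stmt18Aux.I' t₁ t₂ t₁₂) (MvPolynomial.X 0 * MvPolynomial.X 1) =
        (t₂ + t₁ * t₁₂) •
          Ideal.Quotient.mk (Stmt18Aux.I' t₁ t₂ t₁₂) (MvPolynomial.X 0 * MvPolynomial.X 1)
    rw [← map_mul, hsm]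
    apply Stmt18Aux.quot_eq t₁ t₂ t₁₂ (MvPolynomial.C t₁₂ * MvPolynomial.X 1)
      (MvPolynomial.X 0)
    simp only [Stmt18Aux.r1, Stmt18Aux.r2, map_add, map_mul, map_pow]
    ring
  · show Ideal.Quotient.mk (Stmt18Aux.I' t₁ t₂ t₁₂) (MvPolynomial.X 0 * MvPolynomial.X 1) ^ 2 =
        (t₁ * t₂ + t₁ ^ 2 * t₁₂) •
          Ideal.Quotient.mk (Stmt18Aux.I' t₁ t₂ t₁₂) (MvPolynomial.X 0 * MvPolynomial.X 1)
    erw [← map_pow, hsm]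
    apply Stmt18Aux.quot_eq t₁ t₂ t₁₂
      (MvPolynomial.C t₂ * MvPolynomial.X 1 +
        MvPolynomial.C t₁₂ * MvPolynomial.X 1 * (MvPolynomial.X 0 + MvPolynomial.C t₁))
      (MvPolynomial.X 0 ^ 2)
    simp only [Stmt18Aux.r1, Stmt18Aux.r2, map_add, map_mul, map_pow]
    ring
end
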